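/- Let r ∈ ℕ, r ≥ 1, and p ≥ 1. Define S(r,p) = rp/(rp+1) + ∑_{j=1}^{r−1} ((−1)^j/(j+1)!)·∏_{i=0}^{j−1}(rp − i). Then S(r,p) > 0 if r is odd and S(r,p) < 0 if r is even. -/
import Mathlib

lemma key_id (x : ℝ) (hx : x + 1 ≠ 0) : ∀ r : ℕ, 1 ≤ r →
    x / (x + 1) + ∑ j ∈ Finset.Icc 1 (r - 1),
        ((-1 : ℝ) ^ j / (Nat.factorial (j + 1))) * ∏ i ∈ Finset.range j, (x - i)
      = (-1 : ℝ) ^ (r + 1) * (∏ i ∈ Finset.range r, (x - i)) / (Nat.factorial r * (x + 1)) := by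
  intro r hr
  induction r, hr using Nat.le_induction with
  | base =>
    simp [Finset.prod_range_one]
  | succ n hn ih =>
    obtain ⟨m, rfl⟩ : ∃ m, n = m + 1 := ⟨n - 1, by omega⟩
    simp only [Nat.add_sub_cancel] at ih ⊢
    rw [Finset.sum_Icc_succ_top (by omega : 1 ≤ m + 1), ← add_assoc, ih,
      Finset.prod_range_succ (n := m + 1), Nat.factorial_succ (m + 1)]
    have h1 : ((Nat.factorial (m + 1) : ℝ)) ≠ 0 := by
      exact_mod_cast (Nat.factorial_ne_zero (m + 1))
    have h2 : ((Nat.factorial (m + 1 + 1) : ℝ)) ≠ 0 := by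
      exact_mod_cast (Nat.factorial_ne_zero (m + 2))
    push_cast
    field_simp
    ring

theorem stmt_8 (r : ℕ) (hr : 1 ≤ r) (p : ℝ) (hp : 1 ≤ p) :
    (Odd r → 0 < (r * p) / (r * p + 1)
        + ∑ j ∈ Finset.Icc 1 (r - 1),
            ((-1 : ℝ) ^ j / (Nat.factorial (j + 1))) * ∏ i ∈ Finset.range j, (r * p - i)) ∧
    (Even r → (r * p) / (r * p + 1)
        + ∑ j ∈ Finset.Icc 1 (r - 1),
            ((-1 : ℝ) ^ j / (Nat.factorial (j + 1))) * ∏ i ∈ Finset.range j, (r * p - i) < 0) := by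
  have hr' : (1 : ℝ) ≤ (r : ℝ) := by exact_mod_cast hr
  have hx : (r : ℝ) ≤ r * p := le_mul_of_one_le_right (by linarith) hp
  have hx1 : (0 : ℝ) < r * p + 1 := by linarith
  have hkey := key_id (r * p) (ne_of_gt hx1) r hr
  have hP : 0 < ∏ i ∈ Finset.range r, ((r : ℝ) * p - i) := by
    apply Finset.prod_pos
    intro i hi
    simp only [Finset.mem_range] at hi
    have : (i : ℝ) < r := by exact_mod_cast hi
    linarith
  have hfac : (0 : ℝ) < (Nat.factorial r : ℝ) := by
    exact_mod_cast (Nat.factorial_pos r)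
  have hden : (0 : ℝ) < (Nat.factorial r : ℝ) * (r * p + 1) := by positivity
  rw [hkey]
  constructor
  · intro hodd
    rw [Even.neg_one_pow hodd.add_one, one_mul]
    exact div_pos hP hden
  · intro heven
    rw [Odd.neg_one_pow (Even.add_one heven), neg_one_mul, neg_div]
    have := div_pos hP hden
    linarith
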